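/- Let C be a cyclic order on a set A, X ⊆ A, and a,a',b,b',c,c' ∈ A such that a ∼_X a', b ∼_X b', c ∼_X c', while a ≁_X b, a ≁_X c, and b ≁_X c. Then C(a,b,c) holds if and only if C(a',b',c') holds. -/
import Mathlib


/-- `a` and `b` are `X`-close: `X ∩ C(a,-,b)` or `X ∩ C(b,-,a)` is finite. -/
def closeRel {A : Type*} (C : A → A → A → Prop) (X : Set A) (a b : A) : Prop :=
  (X ∩ {x | C a x b}).Finite ∨ (X ∩ {x | C b x a}).Finite

section Aux

variable {A : Type*} {C : A → A → A → Prop} {X : Set A}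
variable (hcyc : ∀ a b c : A, C a b c → C b c a)
variable (hasym : ∀ a b c : A, C a b c → ¬ C c b a)
variable (htrans : ∀ a b c d : A, C a b c → C a c d → C a b d)
variable (htot : ∀ a b c : A, a ≠ b → a ≠ c → b ≠ c → C a b c ∨ C c b a)

include hasym in
lemma deg1 (a b : A) : ¬ C a b a := fun h => hasym a b a h h

include hcyc hasym in
lemma deg2 (a b : A) : ¬ C a a b := fun h => deg1 hasym a b (hcyc _ _ _ h)

include hcyc hasym in
lemma deg3 (a b : A) : ¬ C a b b := fun h => deg1 hasym b a (hcyc _ _ _ (hcyc _ _ _ h))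

include hcyc hasym in
lemma ne12 {a b c : A} (h : C a b c) : a ≠ b := by
  rintro rfl; exact deg2 hcyc hasym _ _ h

include hcyc hasym in
lemma ne23 {a b c : A} (h : C a b c) : b ≠ c := by
  rintro rfl; exact deg3 hcyc hasym _ _ h

include hasym in
lemma closeRel_refl (a : A) : closeRel C X a a :=
  Or.inl (Set.Finite.subset Set.finite_empty
    (by rintro x ⟨-, hx⟩; exact absurd hx (deg1 hasym a x)))

lemma closeRel_symm {a b : A} (h : closeRel C X a b) : closeRel C X b a := h.symm

include hcyc hasym htrans htot in
lemma mem_arc {a b c x : A} (hab : a ≠ b) (h : C a x c) :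
    C a x b ∨ C b x c ∨ x = b := by
  by_cases hxb : x = b
  · exact Or.inr (Or.inr hxb)
  rcases htot a x b (ne12 hcyc hasym h) hab hxb with h1 | h1
  · exact Or.inl h1
  · -- h1 : C b x a
    have h2 := hcyc _ _ _ h1   -- C x a b
    have h3 := hcyc _ _ _ h    -- C x c a
    have h4 := htrans x c a b h3 h2   -- C x c b
    exact Or.inr (Or.inl (hcyc _ _ _ (hcyc _ _ _ h4)))

include hcyc hasym htrans htot in
lemma trans_close {a b c : A} (h1 : closeRel C X a b) (h2 : closeRel C X b c) :
    closeRel C X a c := by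
  rcases eq_or_ne a b with rfl | hab; · exact h2
  rcases eq_or_ne b c with rfl | hbc; · exact h1
  rcases eq_or_ne a c with rfl | hac; · exact closeRel_refl hasym a
  have key : ∀ p q r : A, p ≠ q → (X ∩ {x | C p x q}).Finite →
      (X ∩ {x | C q x r}).Finite → (X ∩ {x | C p x r}).Finite := by
    intro p q r hpq f1 f2
    refine Set.Finite.subset ((f1.union f2).union (Set.finite_singleton q)) ?_
    rintro x ⟨hxX, hxC⟩
    rcases mem_arc hcyc hasym htrans htot hpq hxC with h | h | h
    · exact Or.inl (Or.inl ⟨hxX, h⟩)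
    · exact Or.inl (Or.inr ⟨hxX, h⟩)
    · exact Or.inr h
  rcases h1 with f1 | f1 <;> rcases h2 with f2 | f2
  · exact Or.inl (key a b c hab f1 f2)
  · -- f1 : fin C(a,-,b), f2 : fin C(c,-,b)
    rcases htot a c b hac hab (Ne.symm hbc) with hacb | hbca
    · refine Or.inl (Set.Finite.subset f1 ?_)
      rintro x ⟨hxX, hxC⟩
      exact ⟨hxX, htrans a x c b hxC hacb⟩
    · refine Or.inr (Set.Finite.subset f2 ?_)
      rintro x ⟨hxX, hxC⟩
      exact ⟨hxX, htrans c x a b hxC (hcyc _ _ _ hbca)⟩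
  · -- f1 : fin C(b,-,a), f2 : fin C(b,-,c)
    rcases htot b a c (Ne.symm hab) hbc hac with hbac | hcab
    · refine Or.inl (Set.Finite.subset f2 ?_)
      rintro x ⟨hxX, hxC⟩
      have h3 : C c a x := hcyc _ _ _ (hcyc _ _ _ hxC)
      have h4 : C c b a := hcyc _ _ _ (hcyc _ _ _ hbac)
      exact ⟨hxX, hcyc _ _ _ (htrans c b a x h4 h3)⟩
    · refine Or.inr (Set.Finite.subset f1 ?_)
      rintro x ⟨hxX, hxC⟩
      have h3 : C a c x := hcyc _ _ _ (hcyc _ _ _ hxC)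
      have h4 : C a b c := hcyc _ _ _ hcab
      exact ⟨hxX, hcyc _ _ _ (htrans a b c x h4 h3)⟩
  · exact Or.inr (key c b a (Ne.symm hbc) f2 f1)

include hcyc hasym htrans htot in
/-- Single-point replacement. -/
lemma repl {a a' b c : A} (h : C a b c) (haa : closeRel C X a a')
    (hab : ¬ closeRel C X a b) (hac : ¬ closeRel C X a c) : C a' b c := by
  have hbc : b ≠ c := ne23 hcyc hasym h
  have ha'b : a' ≠ b := by rintro rfl; exact hab haa
  have ha'c : a' ≠ c := by rintro rfl; exact hac haa
  rcases htot b a' c (Ne.symm ha'b) hbc ha'c with hb | hg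
  · -- contradiction case : C b a' c
    exfalso
    have h1 : C b c a := hcyc _ _ _ h
    have h2 : C b a' a := htrans b a' c a hb h1
    have haba' : C a b a' := hcyc _ _ _ (hcyc _ _ _ h2)
    have hcba' : C c b a' := hcyc _ _ _ (hcyc _ _ _ hb)
    have hcab : C c a b := hcyc _ _ _ (hcyc _ _ _ h)
    have hcaa' : C c a a' := htrans c a b a' hcab hcba'
    have haa'c : C a a' c := hcyc _ _ _ hcaa'
    rcases haa with f | f
    · refine hab (Or.inl (Set.Finite.subset f ?_))
      rintro x ⟨hxX, hxC⟩
      exact ⟨hxX, htrans a x b a' hxC haba'⟩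
    · refine hac (Or.inr (Set.Finite.subset f ?_))
      rintro x ⟨hxX, hxC⟩
      have h3 : C a c x := hcyc _ _ _ (hcyc _ _ _ hxC)
      exact ⟨hxX, hcyc _ _ _ (htrans a a' c x haa'c h3)⟩
  · exact hcyc _ _ _ hg

include hcyc hasym htrans htot in
lemma one_dir {a a' b b' c c' : A}
    (haa : closeRel C X a a') (hbb : closeRel C X b b') (hcc : closeRel C X c c')
    (hab : ¬ closeRel C X a b) (hac : ¬ closeRel C X a c) (hbc : ¬ closeRel C X b c)
    (h : C a b c) : C a' b' c' := by
  have hba' : ¬ closeRel C X b a' := fun hx =>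
    hab (trans_close hcyc hasym htrans htot haa (closeRel_symm hx))
  have hca' : ¬ closeRel C X c a' := fun hx =>
    hac (trans_close hcyc hasym htrans htot haa (closeRel_symm hx))
  have hcb' : ¬ closeRel C X c b' := fun hx =>
    hbc (trans_close hcyc hasym htrans htot hbb (closeRel_symm hx))
  have h1 : C a' b c := repl hcyc hasym htrans htot h haa hab hac
  have h2 : C b c a' := hcyc _ _ _ h1
  have h3 : C b' c a' := repl hcyc hasym htrans htot h2 hbb hbc hba'
  have h4 : C c a' b' := hcyc _ _ _ h3
  have h5 : C c' a' b' := repl hcyc hasym htrans htot h4 hcc hca' hcb'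
  exact hcyc _ _ _ h5

end Aux

/-- If `a ∼_X a'`, `b ∼_X b'`, `c ∼_X c'` and `a,b,c` are pairwise non-`X`-close,
then `C(a,b,c) ↔ C(a',b',c')`. -/
theorem stmt4 {A : Type*} (C : A → A → A → Prop) (X : Set A)
    (hcyc : ∀ a b c : A, C a b c → C b c a)
    (hasym : ∀ a b c : A, C a b c → ¬ C c b a)
    (htrans : ∀ a b c d : A, C a b c → C a c d → C a b d)
    (htot : ∀ a b c : A, a ≠ b → a ≠ c → b ≠ c → C a b c ∨ C c b a)
    (a a' b b' c c' : A)
    (haa : closeRel C X a a') (hbb : closeRel C X b b') (hcc : closeRel C X c c')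
    (hab : ¬ closeRel C X a b) (hac : ¬ closeRel C X a c) (hbc : ¬ closeRel C X b c) :
    C a b c ↔ C a' b' c' := by
  have T : ∀ {x y z : A}, closeRel C X x y → closeRel C X y z → closeRel C X x z :=
    fun h1 h2 => trans_close hcyc hasym htrans htot h1 h2
  have S : ∀ {x y : A}, closeRel C X x y → closeRel C X y x := fun h => h.symm
  have hab' : ¬ closeRel C X a' b' := fun hx => hab (T haa (T hx (S hbb)))
  have hac' : ¬ closeRel C X a' c' := fun hx => hac (T haa (T hx (S hcc)))
  have hbc' : ¬ closeRel C X b' c' := fun hx => hbc (T hbb (T hx (S hcc)))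
  constructor
  · exact one_dir hcyc hasym htrans htot haa hbb hcc hab hac hbc
  · exact one_dir hcyc hasym htrans htot (S haa) (S hbb) (S hcc) hab' hac' hbc'
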